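/- A functor u : F ⥤ G over E between Grothendieck fibrations is an equivalence of categories if and only if u is a cartesian functor and for every object S of E the induced functor on fibres u_S : F_S ⥤ G_S is an equivalence of categories. -/

import Mathlib

open CategoryTheory CategoryTheory.Limits CategoryTheory.Functor

universe w₁ w₂ w₃ w₄ v₁ v₂ v₃ v₄

namespace PaperStacks

/-- A functor `p : A ⥤ B` is an isofibration if every isomorphism `f : p.obj a ≅ b` in `B`
lifts to an isomorphism `e : a ≅ a'` in `A` with `p.obj a' = b` and `p.map e.hom = f.hom`
(up to the identification `p.obj a' = b`). -/
def IsIsofibration {A : Type w₁} {B : Type w₂} [Category.{v₁} A] [Category.{v₂} B]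
    (p : A ⥤ B) : Prop :=
  ∀ (a : A) (b : B) (f : p.obj a ≅ b), ∃ (a' : A) (e : a ≅ a') (h : p.obj a' = b),
    p.map e.hom = f.hom ≫ eqToHom h.symm

/-- A surjective equivalence: an equivalence of categories that is surjective on objects. -/
def IsSurjectiveEquivalence {A : Type w₁} {B : Type w₂} [Category.{v₁} A] [Category.{v₂} B]
    (p : A ⥤ B) : Prop :=
  p.IsEquivalence ∧ Function.Surjective p.obj

/-- The functor induced on fibre categories by a functor `u : F ⥤ G` over `E`. -/
def fiberMap {E : Type w₁} {F : Type w₂} {G : Type w₃}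
    [Category.{v₁} E] [Category.{v₂} F] [Category.{v₃} G]
    {p : F ⥤ E} {q : G ⥤ E} (u : F ⥤ G) (h : u ⋙ q = p) (S : E) :
    Functor.Fiber p S ⥤ Functor.Fiber q S :=
  Functor.Fiber.inducedFunctor (F := Functor.Fiber.fiberInclusion ⋙ u)
    (by rw [Functor.assoc, h]; exact Functor.Fiber.fiberInclusion_comp_eq_const)

open CategoryTheory.IsHomLift

section Helpers

variable {E : Type w₁} {F : Type w₂} {G : Type w₃}
    [Category.{v₁} E] [Category.{v₂} F] [Category.{v₃} G]

lemma isHomLift_comp_iff (u : F ⥤ G) (q : G ⥤ E) {R S : E} {a b : F} (f : R ⟶ S) (φ : a ⟶ b) :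
    (u ⋙ q).IsHomLift f φ ↔ q.IsHomLift f (u.map φ) := by
  constructor
  · intro h
    subst_hom_lift (u ⋙ q) f φ
    exact inferInstanceAs (q.IsHomLift (q.map (u.map φ)) (u.map φ))
  · intro h
    subst_hom_lift q f (u.map φ)
    exact inferInstanceAs ((u ⋙ q).IsHomLift ((u ⋙ q).map φ) φ)

variable (u : F ⥤ G) {q : G ⥤ E}

/-- Backward direction: a cartesian functor that is a fiberwise equivalence is essentially
surjective. -/
lemma essSurj_of_fiberwise (hq : q.IsFibered)
    (hfib : ∀ S : E, (fiberMap (q := q) u rfl S).IsEquivalence) : u.EssSurj := by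
  constructor
  intro c
  haveI := hfib (q.obj c)
  obtain ⟨a, ⟨η⟩⟩ := Functor.EssSurj.mem_essImage (F := fiberMap (q := q) u rfl (q.obj c))
    (⟨c, rfl⟩ : Functor.Fiber q (q.obj c))
  exact ⟨a.1, ⟨⟨η.hom.1, η.inv.1, congrArg Subtype.val η.hom_inv_id,
    congrArg Subtype.val η.inv_hom_id⟩⟩⟩

lemma faithful_of_fiberwise (hp : (u ⋙ q).IsFibered)
    (hcart : ∀ ⦃a b : F⦄ (φ : a ⟶ b) ⦃R S : E⦄ (f : R ⟶ S),
          (u ⋙ q).IsStronglyCartesian f φ → q.IsStronglyCartesian f (u.map φ))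
    (hfib : ∀ S : E, (fiberMap (q := q) u rfl S).IsEquivalence) : u.Faithful := by
  constructor
  intro a b χ₁ χ₂ h
  obtain ⟨b', ψ, hψ⟩ := Functor.IsPreFibered.exists_isCartesian' (p := u ⋙ q) ((u ⋙ q).map χ₁)
  haveI : (u ⋙ q).IsStronglyCartesian ((u ⋙ q).map χ₁) ψ := inferInstance
  haveI hψq : q.IsStronglyCartesian ((u ⋙ q).map χ₁) (u.map ψ) := hcart ψ _ inferInstance
  -- χ₂ also lifts (u ⋙ q).map χ₁
  have hbase : (u ⋙ q).map χ₁ = (u ⋙ q).map χ₂ := by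
    show q.map (u.map χ₁) = q.map (u.map χ₂); rw [h]
  haveI : (u ⋙ q).IsHomLift ((u ⋙ q).map χ₁) χ₂ := hbase ▸ inferInstance
  -- the induced maps into b'
  let τ₁ := IsCartesian.map (u ⋙ q) ((u ⋙ q).map χ₁) ψ χ₁
  let τ₂ := IsCartesian.map (u ⋙ q) ((u ⋙ q).map χ₁) ψ χ₂
  -- they become equal after applying u
  haveI h₁ : q.IsHomLift (𝟙 ((u ⋙ q).obj a)) (u.map τ₁) :=
    (isHomLift_comp_iff u q _ _).mp inferInstance
  haveI h₂ : q.IsHomLift (𝟙 ((u ⋙ q).obj a)) (u.map τ₂) :=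
    (isHomLift_comp_iff u q _ _).mp inferInstance
  have huτ : u.map τ₁ = u.map τ₂ := by
    apply IsStronglyCartesian.ext q ((u ⋙ q).map χ₁) (u.map ψ) (𝟙 ((u ⋙ q).obj a))
    rw [← u.map_comp, ← u.map_comp]
    rw [IsCartesian.fac, IsCartesian.fac, h]
  -- conclude by fiberwise faithfulness
  haveI := hfib ((u ⋙ q).obj a)
  let S := (u ⋙ q).obj a
  let A : Functor.Fiber (u ⋙ q) S := ⟨a, rfl⟩
  let B' : Functor.Fiber (u ⋙ q) S := ⟨b', domain_eq (u ⋙ q) ((u ⋙ q).map χ₁) ψ⟩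
  let τ₁' : A ⟶ B' := ⟨τ₁, inferInstance⟩
  let τ₂' : A ⟶ B' := ⟨τ₂, inferInstance⟩
  have : (fiberMap (q := q) u rfl S).map τ₁' = (fiberMap (q := q) u rfl S).map τ₂' := Subtype.ext huτ
  have hττ : τ₁' = τ₂' := (fiberMap (q := q) u rfl S).map_injective this
  have : τ₁ = τ₂ := congrArg Subtype.val hττ
  calc χ₁ = τ₁ ≫ ψ := (IsCartesian.fac _ _ _ _).symm
    _ = τ₂ ≫ ψ := by rw [this]
    _ = χ₂ := IsCartesian.fac _ _ _ _

lemma full_of_fiberwise (hp : (u ⋙ q).IsFibered)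
    (hcart : ∀ ⦃a b : F⦄ (φ : a ⟶ b) ⦃R S : E⦄ (f : R ⟶ S),
          (u ⋙ q).IsStronglyCartesian f φ → q.IsStronglyCartesian f (u.map φ))
    (hfib : ∀ S : E, (fiberMap (q := q) u rfl S).IsEquivalence) : u.Full := by
  constructor
  intro a b ψG
  obtain ⟨b', φ, hφ⟩ := Functor.IsPreFibered.exists_isCartesian' (p := u ⋙ q) (q.map ψG)
  haveI : (u ⋙ q).IsStronglyCartesian (q.map ψG) φ := inferInstance
  haveI hφq : q.IsStronglyCartesian (q.map ψG) (u.map φ) := hcart φ _ inferInstance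
  obtain ⟨χG, ⟨hχl, hχc⟩, -⟩ := IsStronglyCartesian.universal_property q (q.map ψG) (u.map φ)
    (𝟙 (q.obj (u.obj a))) (q.map ψG) (by simp) ψG
  haveI := hχl
  haveI := hfib ((u ⋙ q).obj a)
  let S := (u ⋙ q).obj a
  let A : Functor.Fiber (u ⋙ q) S := ⟨a, rfl⟩
  let B' : Functor.Fiber (u ⋙ q) S := ⟨b', domain_eq (u ⋙ q) (q.map ψG) φ⟩
  let χG' : (fiberMap (q := q) u rfl S).obj A ⟶ (fiberMap (q := q) u rfl S).obj B' := ⟨χG, hχl⟩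
  obtain ⟨χ₀, hχ₀⟩ := (fiberMap (q := q) u rfl S).map_surjective χG'
  refine ⟨χ₀.1 ≫ φ, ?_⟩
  have : u.map χ₀.1 = χG := congrArg Subtype.val hχ₀
  rw [u.map_comp, this, hχc]

end Helpers

section Forward

variable {E : Type w₁} {F : Type w₂} {G : Type w₃}
    [Category.{v₁} E] [Category.{v₂} F] [Category.{v₃} G]
    (u : F ⥤ G) {q : G ⥤ E}

lemma cartesian_of_equivalence [u.IsEquivalence]
    {R S : E} (f : R ⟶ S) {a b : F} (φ : a ⟶ b)
    [hφ : (u ⋙ q).IsStronglyCartesian f φ] : q.IsStronglyCartesian f (u.map φ) := by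
  haveI hl : q.IsHomLift f (u.map φ) := (isHomLift_comp_iff u q f φ).mp inferInstance
  constructor
  intro c g ψ' hψ'
  haveI := hψ'
  let δ : u.obj (u.objPreimage c) ≅ c := u.objObjPreimageIso c
  set c₀ := u.objPreimage c with hc₀
  haveI : q.IsHomLift (q.map δ.hom ≫ g ≫ f) (δ.hom ≫ ψ') := inferInstance
  let χ₀ : c₀ ⟶ b := u.preimage (δ.hom ≫ ψ')
  have hχ₀ : u.map χ₀ = δ.hom ≫ ψ' := u.map_preimage _
  haveI h4 : (u ⋙ q).IsHomLift ((q.map δ.hom ≫ g) ≫ f) χ₀ := by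
    rw [isHomLift_comp_iff u q, hχ₀, Category.assoc]
    infer_instance
  obtain ⟨τ, ⟨hτl, hτc⟩, hτu⟩ := IsStronglyCartesian.universal_property (u ⋙ q) f φ
    (q.map δ.hom ≫ g) ((q.map δ.hom ≫ g) ≫ f) rfl χ₀
  haveI := hτl
  refine ⟨δ.inv ≫ u.map τ, ⟨?_, ?_⟩, ?_⟩
  · haveI h5 : q.IsHomLift (q.map δ.hom ≫ g) (u.map τ) := (isHomLift_comp_iff u q _ _).mp hτl
    haveI h6 : q.IsHomLift (inv (q.map δ.hom)) δ.inv := by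
      have := IsHomLift.inv q (q.map δ.hom) δ.hom
      simpa using this
    have h7 := IsHomLift.comp q (inv (q.map δ.hom)) (q.map δ.hom ≫ g) δ.inv (u.map τ)
    simpa using h7
  · rw [Category.assoc, ← u.map_comp, hτc, hχ₀, Iso.inv_hom_id_assoc]
  · rintro π ⟨hπl, hπc⟩
    haveI := hπl
    haveI : q.IsHomLift (q.map δ.hom ≫ g) (δ.hom ≫ π) := inferInstance
    have hσ : u.map (u.preimage (δ.hom ≫ π)) = δ.hom ≫ π := u.map_preimage _
    set σ := u.preimage (δ.hom ≫ π) with hσdef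
    haveI : (u ⋙ q).IsHomLift (q.map δ.hom ≫ g) σ := by
      rw [isHomLift_comp_iff u q, hσ]; infer_instance
    have hσφ : σ ≫ φ = χ₀ := by
      apply u.map_injective
      rw [u.map_comp, hσ, Category.assoc, hπc, hχ₀]
    have hστ : σ = τ := hτu σ ⟨inferInstance, hσφ⟩
    rw [← hστ, hσ, Iso.inv_hom_id_assoc]

lemma fiberwise_equivalence_of_equivalence (hp : (u ⋙ q).IsFibered) [u.IsEquivalence] (S : E) :
    (fiberMap (q := q) u rfl S).IsEquivalence := by
  haveI : (fiberMap (q := q) u rfl S).Faithful := by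
    constructor
    intro X Y φ ψ h
    exact Subtype.ext (u.map_injective (congrArg Subtype.val h))
  haveI : (fiberMap (q := q) u rfl S).Full := by
    constructor
    intro X Y ψ
    haveI hl : q.IsHomLift (𝟙 S) ψ.1 := ψ.2
    haveI : (u ⋙ q).IsHomLift (𝟙 S) (u.preimage ψ.1) := by
      have e1 := u.map_preimage ψ.1
      rw [isHomLift_comp_iff u q, e1]; exact hl
    exact ⟨⟨u.preimage ψ.1, this⟩, Subtype.ext (u.map_preimage ψ.1)⟩
  haveI : (fiberMap (q := q) u rfl S).EssSurj := by
    constructor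
    intro c
    let δ : u.obj (u.objPreimage c.1) ≅ c.1 := u.objObjPreimageIso c.1
    set c₀ := u.objPreimage c.1 with hc₀def
    let e : q.obj (u.obj c₀) ⟶ S := q.map δ.hom ≫ eqToHom c.2
    haveI hel : q.IsHomLift e δ.hom := inferInstance
    haveI : IsIso e := by unfold e; infer_instance
    obtain ⟨c₁, θ, hθ⟩ := Functor.IsPreFibered.exists_isCartesian' (p := u ⋙ q) (inv e)
    haveI : (u ⋙ q).IsStronglyCartesian (inv e) θ := inferInstance
    haveI : IsIso θ := IsStronglyCartesian.isIso_of_base_isIso (u ⋙ q) (inv e) θ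
    have hc₁ : (u ⋙ q).obj c₁ = S := domain_eq (u ⋙ q) (inv e) θ
    let ζ : u.obj c₁ ⟶ c.1 := u.map θ ≫ δ.hom
    haveI : IsIso ζ := by unfold ζ; infer_instance
    haveI hζl : q.IsHomLift (𝟙 S) ζ := by
      haveI : q.IsHomLift (inv e) (u.map θ) := (isHomLift_comp_iff u q _ _).mp inferInstance
      have := IsHomLift.comp q (inv e) e (u.map θ) δ.hom
      simpa using this
    haveI hζi : q.IsHomLift (𝟙 S) (inv ζ) := inferInstance
    refine ⟨⟨c₁, hc₁⟩, ⟨⟨⟨ζ, hζl⟩, ⟨(inv ζ : c.1 ⟶ u.obj c₁), hζi⟩, ?_, ?_⟩⟩⟩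
    · exact Subtype.ext (by simp : ζ ≫ inv ζ = 𝟙 _)
    · exact Subtype.ext (by simp : inv ζ ≫ ζ = 𝟙 _)
  exact { }

end Forward

/-- A functor `u : F ⥤ G` over `E` between Grothendieck fibrations is an
equivalence of categories if and only if `u` is a cartesian functor and every induced
functor on fibre categories is an equivalence of categories. -/
theorem equivalence_iff_cartesian_and_fiberwise_equivalence
    {E : Type w₁} {F : Type w₂} {G : Type w₃}
    [Category.{v₁} E] [Category.{v₂} F] [Category.{v₃} G]
    {p : F ⥤ E} {q : G ⥤ E} (u : F ⥤ G) (hu : u ⋙ q = p)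
    (hp : p.IsFibered) (hq : q.IsFibered) :
    u.IsEquivalence ↔
      ((∀ ⦃a b : F⦄ (φ : a ⟶ b) ⦃R S : E⦄ (f : R ⟶ S),
          p.IsStronglyCartesian f φ → q.IsStronglyCartesian f (u.map φ)) ∧
        ∀ S : E, (fiberMap u hu S).IsEquivalence) := by
  subst hu
  constructor
  · intro hequiv
    refine ⟨fun a b φ R S f hφ => ?_, fun S => fiberwise_equivalence_of_equivalence u hp S⟩
    haveI := hφ
    exact cartesian_of_equivalence u f φ
  · rintro ⟨hcart, hfib⟩
    haveI := essSurj_of_fiberwise u hq hfib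
    haveI := faithful_of_fiberwise u hp hcart hfib
    haveI := full_of_fiberwise u hp hcart hfib
    exact { }

end PaperStacks
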